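/- Let W be a nonempty countable subset of the positive reals and L a finite set of labels with |L| ≥ 2, fix l₀ ∈ L, and let 𝒴 be the set of strings of ⟨W,L⟩ with at least two runs whose first run has label l₀ and whose subsequent runs all have labels different from l₀. Suppose C > 0 satisfies (|L|−1)·G_W(C) = 1, where G_W(s) = Σ_{ν∈W} exp(−ν·s). Then Σ_{y∈𝒴} exp(−w(y)·C) = 1, i.e., p_Y(y) := exp(−w(y)·C) defines a probability mass function on 𝒴. -/

import Mathlib

open scoped ENNReal

/-- A string of the general run-length set `⟨W,L⟩`: a nonempty finite sequence of runs
`(ν, l) ∈ W × L` in which any two consecutive runs carry distinct labels. -/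
def IsRLString {L : Type*} (W : Set ℝ) (a : List (ℝ × L)) : Prop :=
  a ≠ [] ∧ (∀ r ∈ a, r.1 ∈ W) ∧ a.Chain' fun p q => p.2 ≠ q.2

/-- The weight of a string: the sum of its run-lengths. -/
def rlWeight {L : Type*} (a : List (ℝ × L)) : ℝ :=
  (a.map Prod.fst).sum

/-- `G_W(s) = ∑_{ν ∈ W} exp(-ν·s)`, valued in `[0,∞]`. -/
noncomputable def GW (W : Set ℝ) (s : ℝ) : ℝ≥0∞ :=
  ∑' ν : W, ENNReal.ofReal (Real.exp (-(ν : ℝ) * s))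

/-- Membership in the set `𝒴`: a string of `⟨W,L⟩` with at least two runs, whose first
run carries the label `l₀` and all of whose subsequent runs carry labels different
from `l₀`. -/
def MemY {L : Type*} (W : Set ℝ) (l₀ : L) (a : List (ℝ × L)) : Prop :=
  IsRLString W a ∧
    ∃ r rest, a = r :: rest ∧ r.2 = l₀ ∧ rest ≠ [] ∧ ∀ q ∈ rest, q.2 ≠ l₀

set_option linter.unusedSectionVars false

namespace SupportPmfAux

attribute [local instance] Classical.propDecidable

variable {L : Type*} [Fintype L] (W : Set ℝ) (l₀ : L) (C : ℝ)

noncomputable def eterm (c : List (ℝ × L)) : ℝ≥0∞ :=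
  ENNReal.ofReal (Real.exp (-rlWeight c * C))

theorem eterm_nil : eterm C ([] : List (ℝ × L)) = 1 := by
  simp [eterm, rlWeight]

theorem eterm_cons (ν : ℝ) (l : L) (c : List (ℝ × L)) :
    eterm C ((ν, l) :: c) = ENNReal.ofReal (Real.exp (-ν * C)) * eterm C c := by
  rw [eterm, eterm, ← ENNReal.ofReal_mul (Real.exp_nonneg _), ← Real.exp_add]
  congr 2
  simp [rlWeight]
  ring

/-- chains over W × (L \ {l₀}) whose first label differs from `l`. -/
def Good (l : L) (c : List (ℝ × L)) : Prop :=
  (∀ r ∈ c, r.1 ∈ W) ∧ (∀ r ∈ c, r.2 ≠ l₀) ∧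
    c.Chain' (fun p q => p.2 ≠ q.2) ∧ ∀ p ∈ c.head?, p.2 ≠ l

theorem good_nil (l : L) : Good W l₀ l ([] : List (ℝ × L)) := by
  refine ⟨by simp, by simp, List.isChain_nil, by simp⟩

def consEquiv (l : L) (k : ℕ) :
    {c : List (ℝ × L) // Good W l₀ l c ∧ c.length = k + 1} ≃
      (p : ↥W × {x : {x : L // x ≠ l₀} // (x : L) ≠ l}) ×
        {c : List (ℝ × L) // Good W l₀ (p.2 : {x : L // x ≠ l₀}).1 c ∧ c.length = k} where
  toFun := fun ⟨c, hc⟩ => match c, hc with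
    | (ν, l') :: rest, hc =>
      ⟨(⟨ν, hc.1.1 (ν, l') List.mem_cons_self⟩,
        ⟨⟨l', hc.1.2.1 (ν, l') List.mem_cons_self⟩, hc.1.2.2.2 (ν, l') rfl⟩),
       ⟨rest, ⟨⟨fun r hr => hc.1.1 r (List.mem_cons_of_mem _ hr),
               fun r hr => hc.1.2.1 r (List.mem_cons_of_mem _ hr),
               (List.isChain_cons.mp hc.1.2.2.1).2,
               fun p hp => ((List.isChain_cons.mp hc.1.2.2.1).1 p hp).symm⟩,
        Nat.succ_injective hc.2⟩⟩⟩
  invFun := fun ⟨(⟨ν, hν⟩, ⟨⟨l', hl'0⟩, hl'⟩), ⟨c, hc⟩⟩ =>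
    ⟨(ν, l') :: c,
     ⟨⟨fun r hr => (List.mem_cons.mp hr).elim (fun h => h ▸ hν) (fun h => hc.1.1 r h),
       fun r hr => (List.mem_cons.mp hr).elim (fun h => h ▸ hl'0) (fun h => hc.1.2.1 r h),
       List.isChain_cons.mpr ⟨fun y hy => (hc.1.2.2.2 y hy).symm, hc.1.2.2.1⟩,
       fun p hp => (Option.some_inj.mp hp) ▸ hl'⟩,
      by simp [hc.2]⟩⟩
  left_inv := fun ⟨c, hc⟩ => match c, hc with
    | (ν, l') :: rest, hc => rfl
  right_inv := fun ⟨(⟨ν, hν⟩, ⟨⟨l', hl'0⟩, hl'⟩), ⟨c, hc⟩⟩ => rfl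

noncomputable def D (l : L) (k : ℕ) : ℝ≥0∞ :=
  ∑' c : {c : List (ℝ × L) // Good W l₀ l c ∧ c.length = k}, eterm C c.1

theorem D_zero (l : L) : D W l₀ C l 0 = 1 := by
  rw [D, tsum_eq_single (⟨[], good_nil W l₀ l, rfl⟩ :
      {c : List (ℝ × L) // Good W l₀ l c ∧ c.length = 0})]
  · exact eterm_nil C
  · intro b hb
    exact absurd (Subtype.ext (List.length_eq_zero_iff.mp b.2.2)) hb


theorem tsum_WS (S : Type*) [Fintype S] :
    ∑' p : ↥W × S, ENNReal.ofReal (Real.exp (-(p.1 : ℝ) * C)) =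
      (Fintype.card S : ℝ≥0∞) * GW W C := by
  rw [ENNReal.tsum_prod']
  simp_rw [tsum_fintype, Finset.sum_const, Finset.card_univ, nsmul_eq_mul]
  rw [ENNReal.tsum_mul_left, GW]

theorem card_S (n : ℕ) (hcard : Fintype.card L = n + 2) (l : L) (hl : l ≠ l₀) :
    Fintype.card {x : {x : L // x ≠ l₀} // (x : L) ≠ l} = n := by
  have h0 : Fintype.card {x : L // x = l₀} = 1 := Fintype.card_subtype_eq l₀
  have h1 : Fintype.card {x : L // x ≠ l₀} = n + 1 := by
    have := Fintype.card_subtype_compl (fun x : L => x = l₀)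
    rw [h0, hcard] at this
    simpa using this
  have h2 : Fintype.card {x : {x : L // x ≠ l₀} // (x : L) = l} = 1 := by
    rw [Fintype.card_congr (Equiv.subtypeEquivRight
      (q := fun x : {x : L // x ≠ l₀} => x = ⟨l, hl⟩)
      (fun x => ⟨fun h => Subtype.ext h, fun h => congrArg Subtype.val h⟩))]
    exact Fintype.card_subtype_eq _
  have := Fintype.card_subtype_compl (fun x : {x : L // x ≠ l₀} => (x : L) = l)
  rw [h1, h2] at this
  simpa using this

theorem D_succ (l : L) (k : ℕ) :
    D W l₀ C l (k + 1) =
      ∑' p : ↥W × {x : {x : L // x ≠ l₀} // (x : L) ≠ l},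
        ENNReal.ofReal (Real.exp (-(p.1 : ℝ) * C)) *
          D W l₀ C ((p.2 : {x : L // x ≠ l₀}) : L) k := by
  rw [D, ← Equiv.tsum_eq (consEquiv W l₀ l k).symm (fun c => eterm C c.1),
    ENNReal.tsum_sigma']
  refine tsum_congr fun p => ?_
  rw [D, ← ENNReal.tsum_mul_left]
  refine tsum_congr fun c => ?_
  show eterm C (((p.1 : ℝ), ((p.2 : {x : L // x ≠ l₀}) : L)) :: c.1) = _
  rw [eterm_cons]

theorem D_eq (n : ℕ) (hcard : Fintype.card L = n + 2) :
    ∀ k, ∀ l : L, l ≠ l₀ → D W l₀ C l k = ((n : ℝ≥0∞) * GW W C) ^ k := by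
  intro k
  induction k with
  | zero => intro l hl; simp [D_zero]
  | succ k ih =>
    intro l hl
    rw [D_succ]
    calc ∑' p : ↥W × {x : {x : L // x ≠ l₀} // (x : L) ≠ l},
          ENNReal.ofReal (Real.exp (-(p.1 : ℝ) * C)) *
            D W l₀ C ((p.2 : {x : L // x ≠ l₀}) : L) k
        = ∑' p : ↥W × {x : {x : L // x ≠ l₀} // (x : L) ≠ l},
          ENNReal.ofReal (Real.exp (-(p.1 : ℝ) * C)) * ((n : ℝ≥0∞) * GW W C) ^ k := by
          exact tsum_congr fun p => by rw [ih _ p.2.1.2]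
      _ = (∑' p : ↥W × {x : {x : L // x ≠ l₀} // (x : L) ≠ l},
          ENNReal.ofReal (Real.exp (-(p.1 : ℝ) * C))) * ((n : ℝ≥0∞) * GW W C) ^ k :=
          ENNReal.tsum_mul_right
      _ = ((n : ℝ≥0∞) * GW W C) ^ (k + 1) := by
          rw [tsum_WS, card_S l₀ n hcard l hl]; ring

def lenEquiv (P : List (ℝ × L) → Prop) :
    {c : List (ℝ × L) // P c} ≃ Σ k : ℕ, {c : List (ℝ × L) // P c ∧ c.length = k} where
  toFun c := ⟨c.1.length, c.1, c.2, rfl⟩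
  invFun p := ⟨p.2.1, p.2.2.1⟩
  left_inv c := rfl
  right_inv := by rintro ⟨k, c, hc, rfl⟩; rfl

theorem E_eq (n : ℕ) (hcard : Fintype.card L = n + 2)
    (hG : ((n : ℝ≥0∞) + 1) * GW W C = 1) (l : L) (hl : l ≠ l₀) :
    ∑' c : {c : List (ℝ × L) // Good W l₀ l c}, eterm C c.1 = (n : ℝ≥0∞) + 1 := by
  have hne0 : ((n : ℝ≥0∞) + 1) ≠ 0 := by simp
  have hnetop : ((n : ℝ≥0∞) + 1) ≠ ⊤ :=
    ENNReal.add_ne_top.mpr ⟨ENNReal.natCast_ne_top n, ENNReal.one_ne_top⟩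
  have hGval : GW W C = ((n : ℝ≥0∞) + 1)⁻¹ := by
    calc GW W C = (((n : ℝ≥0∞) + 1)⁻¹ * ((n : ℝ≥0∞) + 1)) * GW W C := by
          rw [ENNReal.inv_mul_cancel hne0 hnetop, one_mul]
      _ = ((n : ℝ≥0∞) + 1)⁻¹ * (((n : ℝ≥0∞) + 1) * GW W C) := by ring
      _ = ((n : ℝ≥0∞) + 1)⁻¹ := by rw [hG, mul_one]
  have hsub : 1 - (n : ℝ≥0∞) * GW W C = ((n : ℝ≥0∞) + 1)⁻¹ := by
    apply ENNReal.sub_eq_of_eq_add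
    · rw [hGval]
      exact ENNReal.mul_ne_top (ENNReal.natCast_ne_top n) (ENNReal.inv_ne_top.mpr hne0)
    · rw [hGval]
      calc (1 : ℝ≥0∞) = ((n : ℝ≥0∞) + 1) * ((n : ℝ≥0∞) + 1)⁻¹ :=
            (ENNReal.mul_inv_cancel hne0 hnetop).symm
        _ = ((n : ℝ≥0∞) + 1)⁻¹ + (n : ℝ≥0∞) * ((n : ℝ≥0∞) + 1)⁻¹ := by ring
  rw [← Equiv.tsum_eq (lenEquiv (Good W l₀ l)).symm (fun c => eterm C c.1),
    ENNReal.tsum_sigma']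
  calc (∑' (k : ℕ) (c : {c : List (ℝ × L) // Good W l₀ l c ∧ c.length = k}),
          (fun c : {c : List (ℝ × L) // Good W l₀ l c} => eterm C c.1)
            ((lenEquiv (Good W l₀ l)).symm ⟨k, c⟩))
      = ∑' k : ℕ, ((n : ℝ≥0∞) * GW W C) ^ k :=
        tsum_congr fun k => D_eq W l₀ C n hcard k l hl
    _ = (1 - (n : ℝ≥0∞) * GW W C)⁻¹ := ENNReal.tsum_geometric _
    _ = (n : ℝ≥0∞) + 1 := by rw [hsub, inv_inv]

theorem memY_elim {ν₀ : ℝ} {lab : L} {ν₁ : ℝ} {l₁ : L} {rest : List (ℝ × L)}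
    (ha : MemY W l₀ ((ν₀, lab) :: (ν₁, l₁) :: rest)) :
    ν₀ ∈ W ∧ lab = l₀ ∧ ν₁ ∈ W ∧ l₁ ≠ l₀ ∧ Good W l₀ l₁ rest := by
  obtain ⟨⟨hne, hmem, hchain⟩, r, rest', heq, hr, hrne, hall⟩ := ha
  obtain ⟨rfl, rfl⟩ : r = (ν₀, lab) ∧ rest' = (ν₁, l₁) :: rest := by
    rw [List.cons.injEq] at heq
    exact ⟨heq.1.symm, heq.2.symm⟩
  refine ⟨hmem (ν₀, lab) (by simp), hr, hmem (ν₁, l₁) (by simp), hall (ν₁, l₁) (by simp),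
    ?_, ?_, ?_, ?_⟩
  · exact fun q hq => hmem q (by simp [hq])
  · exact fun q hq => hall q (by simp [hq])
  · exact hchain.tail.tail
  · exact fun p hp => ((List.isChain_cons.mp hchain.tail).1 p hp).symm

def topEquiv : {a : List (ℝ × L) // MemY W l₀ a} ≃
    (p : ↥W × (↥W × {x : L // x ≠ l₀})) ×
      {c : List (ℝ × L) // Good W l₀ ((p.2.2 : {x : L // x ≠ l₀}) : L) c} where
  toFun := fun ⟨a, ha⟩ => match a, ha with
    | [], ha => absurd ha (by rintro ⟨_, r, rest, h, _⟩; simp at h)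
    | [x], ha => absurd ha (by
        rintro ⟨_, r, rest, h, _, hne, _⟩
        rw [List.cons.injEq] at h
        exact hne h.2.symm)
    | (ν₀, lab) :: (ν₁, l₁) :: rest, ha =>
      ⟨(⟨ν₀, (memY_elim W l₀ ha).1⟩,
        (⟨ν₁, (memY_elim W l₀ ha).2.2.1⟩, ⟨l₁, (memY_elim W l₀ ha).2.2.2.1⟩)),
       ⟨rest, (memY_elim W l₀ ha).2.2.2.2⟩⟩
  invFun := fun ⟨(⟨ν₀, h₀⟩, (⟨ν₁, h₁⟩, ⟨l₁, hl₁⟩)), ⟨c, hc⟩⟩ =>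
    ⟨(ν₀, l₀) :: (ν₁, l₁) :: c, by
      refine ⟨⟨by simp, ?_, ?_⟩, (ν₀, l₀), (ν₁, l₁) :: c, rfl, rfl, by simp, ?_⟩
      · rintro r hr
        rcases List.mem_cons.mp hr with rfl | hr
        · exact h₀
        rcases List.mem_cons.mp hr with rfl | hr
        · exact h₁
        · exact hc.1 r hr
      · refine List.isChain_cons.mpr ⟨?_,
          List.isChain_cons.mpr ⟨fun y hy => (hc.2.2.2 y hy).symm, hc.2.2.1⟩⟩
        exact fun y hy => (Option.some_inj.mp hy) ▸ Ne.symm hl₁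
      · rintro q hq
        rcases List.mem_cons.mp hq with rfl | hq
        · exact hl₁
        · exact hc.2.1 q hq⟩
  left_inv := fun ⟨a, ha⟩ => match a, ha with
    | [], ha => absurd ha (by rintro ⟨_, r, rest, h, _⟩; simp at h)
    | [x], ha => absurd ha (by
        rintro ⟨_, r, rest, h, _, hne, _⟩
        rw [List.cons.injEq] at h
        exact hne h.2.symm)
    | (ν₀, lab) :: (ν₁, l₁) :: rest, ha => Subtype.ext (by
        show (ν₀, l₀) :: (ν₁, l₁) :: rest = (ν₀, lab) :: (ν₁, l₁) :: rest
        rw [(memY_elim W l₀ ha).2.1])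
  right_inv := fun ⟨(⟨ν₀, h₀⟩, (⟨ν₁, h₁⟩, ⟨l₁, hl₁⟩)), ⟨c, hc⟩⟩ => rfl

end SupportPmfAux

/-- If `C > 0` satisfies `(|L|-1)·G_W(C) = 1`, then `∑_{y∈𝒴} exp(-w(y)·C) = 1`,
i.e., `p_Y(y) := exp(-w(y)·C)` defines a probability mass function on `𝒴`. -/
theorem support_pmf
    {L : Type*} [Fintype L] (hL : 2 ≤ Fintype.card L)
    (W : Set ℝ) (hWne : W.Nonempty) (hWc : W.Countable) (hWpos : ∀ ν ∈ W, 0 < ν)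
    (l₀ : L)
    (C : ℝ) (hC : 0 < C)
    (hCeq : ((Fintype.card L : ℝ≥0∞) - 1) * GW W C = 1) :
    ∑' y : {a : List (ℝ × L) // MemY W l₀ a},
      ENNReal.ofReal (Real.exp (-rlWeight (y : List (ℝ × L)) * C)) = 1 := by
  classical
  open SupportPmfAux in
  obtain ⟨n, hcard⟩ : ∃ n, Fintype.card L = n + 2 := ⟨Fintype.card L - 2, by omega⟩
  have hG : ((n : ℝ≥0∞) + 1) * GW W C = 1 := by
    have hcast : ((Fintype.card L : ℝ≥0∞) - 1) = (n : ℝ≥0∞) + 1 := by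
      rw [hcard]
      push_cast
      rw [show ((n : ℝ≥0∞) + 2) = ((n : ℝ≥0∞) + 1) + 1 by ring,
        ENNReal.add_sub_cancel_right ENNReal.one_ne_top]
    rwa [hcast] at hCeq
  have hcardL' : Fintype.card {x : L // x ≠ l₀} = n + 1 := by
    have := Fintype.card_subtype_compl (fun x : L => x = l₀)
    rw [Fintype.card_subtype_eq l₀, hcard] at this
    simpa using this
  have key := Equiv.tsum_eq (topEquiv W l₀).symm
    (fun y : {a : List (ℝ × L) // MemY W l₀ a} => eterm C y.1)
  rw [show (∑' y : {a : List (ℝ × L) // MemY W l₀ a},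
      ENNReal.ofReal (Real.exp (-rlWeight (y : List (ℝ × L)) * C)))
      = ∑' y : {a : List (ℝ × L) // MemY W l₀ a}, eterm C y.1 from rfl,
    ← key, ENNReal.tsum_sigma']
  have hstep : ∀ p : ↥W × (↥W × {x : L // x ≠ l₀}),
      (∑' c : {c : List (ℝ × L) // Good W l₀ ((p.2.2 : {x : L // x ≠ l₀}) : L) c},
        eterm C (((topEquiv W l₀).symm ⟨p, c⟩) : List (ℝ × L)))
      = ENNReal.ofReal (Real.exp (-(p.1 : ℝ) * C)) *
          (ENNReal.ofReal (Real.exp (-(p.2.1 : ℝ) * C)) * ((n : ℝ≥0∞) + 1)) := by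
    intro p
    have : ∀ c : {c : List (ℝ × L) // Good W l₀ ((p.2.2 : {x : L // x ≠ l₀}) : L) c},
        eterm C (((topEquiv W l₀).symm ⟨p, c⟩) : List (ℝ × L))
        = ENNReal.ofReal (Real.exp (-(p.1 : ℝ) * C)) *
            (ENNReal.ofReal (Real.exp (-(p.2.1 : ℝ) * C)) * eterm C c.1) := by
      intro c
      show eterm C (((p.1 : ℝ), l₀) :: ((p.2.1 : ℝ), ((p.2.2 : {x : L // x ≠ l₀}) : L)) :: c.1) = _
      rw [eterm_cons, eterm_cons]
    rw [tsum_congr this, ENNReal.tsum_mul_left, ENNReal.tsum_mul_left,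
      E_eq W l₀ C n hcard hG _ p.2.2.2]
  rw [tsum_congr hstep]
  have h1 : ∑' p : ↥W × (↥W × {x : L // x ≠ l₀}),
      ENNReal.ofReal (Real.exp (-(p.1 : ℝ) * C)) *
        (ENNReal.ofReal (Real.exp (-(p.2.1 : ℝ) * C)) * ((n : ℝ≥0∞) + 1))
      = GW W C * (((n : ℝ≥0∞) + 1) * GW W C * ((n : ℝ≥0∞) + 1)) := by
    have hq : (∑' q : ↥W × {x : L // x ≠ l₀},
        ENNReal.ofReal (Real.exp (-(q.1 : ℝ) * C)) * ((n : ℝ≥0∞) + 1))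
        = ((n : ℝ≥0∞) + 1) * GW W C * ((n : ℝ≥0∞) + 1) := by
      rw [ENNReal.tsum_mul_right, tsum_WS W C, hcardL']
      push_cast
      ring
    rw [ENNReal.tsum_prod']
    simp_rw [ENNReal.tsum_mul_left]
    rw [hq, ENNReal.tsum_mul_right, GW]
  rw [h1]
  calc GW W C * (((n : ℝ≥0∞) + 1) * GW W C * ((n : ℝ≥0∞) + 1))
      = (((n : ℝ≥0∞) + 1) * GW W C) * (((n : ℝ≥0∞) + 1) * GW W C) := by ring
    _ = 1 := by rw [hG, one_mul]
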